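/- Let f : R^n → R be L-smooth and ℓ-strongly convex with minimizer x⋆, 0 < γ ≤ 1/L, and δ ≥ 0. Suppose x⁺ = x − γh where ‖∇f(x) − h‖ ≤ δ. Then f(x⁺) − f(x⋆) ≤ (1 − γℓ)(f(x) − f(x⋆)) + γδ²/2. -/

import Mathlib

open InnerProductSpace Set

variable {E : Type*} [NormedAddCommGroup E] [InnerProductSpace ℝ E] [CompleteSpace E]

lemma myLineDeriv (f : E → ℝ) (hdiff : Differentiable ℝ f) (x v : E) (t : ℝ) :
    HasDerivAt (fun s : ℝ => f (x + s • v)) ⟪gradient f (x + t • v), v⟫_ℝ t := by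
  have h1 : HasFDerivAt f (toDual ℝ E (gradient f (x + t • v))) (x + t • v) :=
    hasGradientAt_iff_hasFDerivAt.mp (hdiff _).hasGradientAt
  have h2 : HasDerivAt (fun s : ℝ => x + s • v) v t := by
    simpa using ((hasDerivAt_id t).smul_const v).const_add x
  exact h1.comp_hasDerivAt t h2

lemma myDescent (f : E → ℝ) (L : ℝ) (hdiff : Differentiable ℝ f)
    (hsmooth : ∀ x y, ‖gradient f x - gradient f y‖ ≤ L * ‖x - y‖) (x v : E) :
    f (x + v) ≤ f x + ⟪gradient f x, v⟫_ℝ + L / 2 * ‖v‖ ^ 2 := by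
  set φ : ℝ → ℝ := fun t => f (x + t • v) - t * ⟪gradient f x, v⟫_ℝ - L * t ^ 2 / 2 * ‖v‖ ^ 2
    with hφdef
  have hφ : ∀ t : ℝ, HasDerivAt φ
      (⟪gradient f (x + t • v) - gradient f x, v⟫_ℝ - L * t * ‖v‖ ^ 2) t := by
    intro t
    have h1 := myLineDeriv f hdiff x v t
    have h2 : HasDerivAt (fun s : ℝ => s * ⟪gradient f x, v⟫_ℝ) ⟪gradient f x, v⟫_ℝ t := by
      simpa using (hasDerivAt_id t).mul_const ⟪gradient f x, v⟫_ℝ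
    have h3 : HasDerivAt (fun s : ℝ => L * s ^ 2 / 2 * ‖v‖ ^ 2) (L * t * ‖v‖ ^ 2) t := by
      have h4 : HasDerivAt (fun s : ℝ => s ^ 2) (2 * t) t := by
        simpa using hasDerivAt_pow 2 t
      have := ((h4.const_mul L).div_const 2).mul_const (‖v‖ ^ 2)
      exact this.congr_deriv (by ring)
    have := (h1.sub h2).sub h3
    exact this.congr_deriv (by rw [inner_sub_left])
  have hanti : AntitoneOn φ (Icc (0:ℝ) 1) := by
    apply antitoneOn_of_deriv_nonpos (convex_Icc 0 1)
    · exact fun t _ => (hφ t).continuousAt.continuousWithinAt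
    · exact fun t _ => (hφ t).differentiableAt.differentiableWithinAt
    · intro t ht
      rw [interior_Icc] at ht
      rw [(hφ t).deriv]
      have hb : ⟪gradient f (x + t • v) - gradient f x, v⟫_ℝ ≤ L * t * ‖v‖ ^ 2 := by
        calc ⟪gradient f (x + t • v) - gradient f x, v⟫_ℝ
            ≤ ‖gradient f (x + t • v) - gradient f x‖ * ‖v‖ := real_inner_le_norm _ _
          _ ≤ (L * ‖(x + t • v) - x‖) * ‖v‖ := by
              have := hsmooth (x + t • v) x
              nlinarith [norm_nonneg v]
          _ = L * t * ‖v‖ ^ 2 := by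
              rw [add_sub_cancel_left, norm_smul, Real.norm_eq_abs,
                abs_of_pos ht.1]; ring
      linarith
  have := hanti (left_mem_Icc.mpr zero_le_one) (right_mem_Icc.mpr zero_le_one) zero_le_one
  simp only [hφdef] at this
  norm_num [-inner_gradient_left] at this
  linarith

lemma myStrongLower (f : E → ℝ) (ℓ : ℝ) (hdiff : Differentiable ℝ f)
    (hstrong : StrongConvexOn univ ℓ f) (x y : E) :
    f x + ⟪gradient f x, y - x⟫_ℝ + ℓ / 2 * ‖y - x‖ ^ 2 ≤ f y := by
  have hg : ConvexOn ℝ univ fun z : E => f z - ℓ / 2 * ‖z‖ ^ 2 :=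
    strongConvexOn_iff_convex.mp hstrong
  set v := y - x with hv
  set ψ : ℝ → ℝ := fun t => f (x + t • v) - ℓ / 2 * ‖x + t • v‖ ^ 2 with hψ
  have hψconv : ConvexOn ℝ univ ψ := by
    have hcomp := hg.comp_affineMap (AffineMap.lineMap x y : ℝ →ᵃ[ℝ] E)
    have heq : ((fun z : E => f z - ℓ / 2 * ‖z‖ ^ 2) ∘ (AffineMap.lineMap x y : ℝ →ᵃ[ℝ] E)) = ψ := by
      funext t
      have harg : (AffineMap.lineMap x y : ℝ →ᵃ[ℝ] E) t = x + t • v := by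
        simp only [AffineMap.lineMap_apply, vsub_eq_sub, vadd_eq_add, hv]
        module
      simp [Function.comp, harg, ψ]
    rw [heq] at hcomp
    simpa using hcomp
  have hnorm : ∀ t : ℝ, ‖x + t • v‖ ^ 2 = ‖x‖ ^ 2 + 2 * t * ⟪x, v⟫_ℝ + t ^ 2 * ‖v‖ ^ 2 := by
    intro t
    rw [norm_add_sq_real, real_inner_smul_right, norm_smul, Real.norm_eq_abs, mul_pow, sq_abs]
    ring
  have hd : HasDerivAt ψ (⟪gradient f x, v⟫_ℝ - ℓ / 2 * (2 * ⟪x, v⟫_ℝ)) 0 := by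
    have h1 := myLineDeriv f hdiff x v 0
    have h2 : HasDerivAt (fun t : ℝ => ℓ / 2 * ‖x + t • v‖ ^ 2)
        (ℓ / 2 * (2 * ⟪x, v⟫_ℝ)) 0 := by
      have hfun : (fun t : ℝ => ℓ / 2 * ‖x + t • v‖ ^ 2)
          = fun t : ℝ => ℓ / 2 * (‖x‖ ^ 2 + 2 * t * ⟪x, v⟫_ℝ + t ^ 2 * ‖v‖ ^ 2) := by
        funext t; rw [hnorm]
      rw [hfun]
      have hq : HasDerivAt (fun t : ℝ => ‖x‖ ^ 2 + 2 * t * ⟪x, v⟫_ℝ + t ^ 2 * ‖v‖ ^ 2)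
          (2 * ⟪x, v⟫_ℝ) 0 := by
        have ha : HasDerivAt (fun t : ℝ => 2 * t * ⟪x, v⟫_ℝ) (2 * ⟪x, v⟫_ℝ) 0 := by
          simpa using (((hasDerivAt_id (0:ℝ)).const_mul 2).mul_const ⟪x, v⟫_ℝ)
        have hb : HasDerivAt (fun t : ℝ => t ^ 2 * ‖v‖ ^ 2) 0 0 := by
          simpa using (hasDerivAt_pow 2 (0:ℝ)).mul_const (‖v‖ ^ 2)
        exact ((ha.const_add (‖x‖ ^ 2)).add hb).congr_deriv (by ring)
      exact hq.const_mul (ℓ / 2)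
    have := h1.sub h2
    exact this.congr_deriv (by rw [zero_smul, add_zero])
  have hs := hψconv.le_slope_of_hasDerivAt (mem_univ 0) (mem_univ 1) zero_lt_one hd
  rw [slope_def_field] at hs
  have hψ0 : ψ 0 = f x - ℓ / 2 * ‖x‖ ^ 2 := by
    show f (x + (0:ℝ) • v) - ℓ / 2 * ‖x + (0:ℝ) • v‖ ^ 2 = f x - ℓ / 2 * ‖x‖ ^ 2
    norm_num
  have hψ1 : ψ 1 = f y - ℓ / 2 * ‖y‖ ^ 2 := by
    have hxy : x + (1:ℝ) • v = y := by rw [one_smul, hv]; abel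
    show f (x + (1:ℝ) • v) - ℓ / 2 * ‖x + (1:ℝ) • v‖ ^ 2 = f y - ℓ / 2 * ‖y‖ ^ 2
    rw [hxy]
  have e1 : ‖v‖ ^ 2 = ‖y‖ ^ 2 - 2 * ⟪y, x⟫_ℝ + ‖x‖ ^ 2 := by
    rw [hv, norm_sub_sq_real]
  have e2 : ⟪x, v⟫_ℝ = ⟪y, x⟫_ℝ - ‖x‖ ^ 2 := by
    rw [hv, inner_sub_right, real_inner_self_eq_norm_sq, real_inner_comm]
  norm_num [-inner_gradient_left] at hs
  rw [hψ0, hψ1] at hs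
  have e1' : ℓ / 2 * ‖v‖ ^ 2 = ℓ / 2 * ‖y‖ ^ 2 - ℓ * ⟪y, x⟫_ℝ + ℓ / 2 * ‖x‖ ^ 2 := by
    rw [e1]; ring
  have e2' : ℓ / 2 * (2 * ⟪x, v⟫_ℝ) = ℓ * ⟪y, x⟫_ℝ - ℓ * ‖x‖ ^ 2 := by
    rw [e2]; ring
  linarith [hs, e1', e2']

/-- contraction under absolute gradient error (Lemma 2 step). -/
theorem stmt_3 (n : ℕ) (f : EuclideanSpace ℝ (Fin n) → ℝ) (L ℓ : ℝ)
    (hL : 0 < L) (hℓ : 0 < ℓ)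
    (hdiff : Differentiable ℝ f)
    (hsmooth : ∀ x y, ‖gradient f x - gradient f y‖ ≤ L * ‖x - y‖)
    (hstrong : StrongConvexOn Set.univ ℓ f)
    (xstar : EuclideanSpace ℝ (Fin n)) (hmin : IsMinOn f Set.univ xstar)
    (γ δ : ℝ) (hγ0 : 0 < γ) (hγ : γ ≤ 1 / L) (hδ : 0 ≤ δ)
    (x h : EuclideanSpace ℝ (Fin n))
    (herr : ‖gradient f x - h‖ ≤ δ) :
    f (x - γ • h) - f xstar
      ≤ (1 - γ * ℓ) * (f x - f xstar) + γ * δ ^ 2 / 2 := by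
  have hdesc := myDescent f L hdiff hsmooth x (-(γ • h))
  rw [← sub_eq_add_neg] at hdesc
  set G := gradient f x with hG
  have hγL : γ * L ≤ 1 := by
    rw [le_div_iff₀ hL] at hγ; linarith
  -- PL inequality
  have hPL : 2 * ℓ * (f x - f xstar) ≤ ‖G‖ ^ 2 := by
    have h1 := myStrongLower f ℓ hdiff hstrong x xstar
    set u := xstar - x with hu
    have h2 : (0:ℝ) ≤ ‖ℓ • u + G‖ ^ 2 := sq_nonneg _
    rw [norm_add_sq_real, real_inner_smul_left, norm_smul, Real.norm_eq_abs, mul_pow,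
      sq_abs] at h2
    have hinner : ⟪G, u⟫_ℝ = ⟪u, G⟫_ℝ := real_inner_comm _ _
    have h1' := mul_le_mul_of_nonneg_left h1 (by positivity : (0:ℝ) ≤ 2 * ℓ)
    rw [← hG] at h1'
    nlinarith [h1', h2, hinner]
  -- inner product expansion
  have hinner : ⟪G, -(γ • h)⟫_ℝ = -γ * ⟪G, h⟫_ℝ := by
    rw [inner_neg_right, real_inner_smul_right]; ring
  have hGh : ‖G - h‖ ^ 2 = ‖G‖ ^ 2 - 2 * ⟪G, h⟫_ℝ + ‖h‖ ^ 2 := by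
    rw [norm_sub_sq_real]
  have hδ2 : ‖G - h‖ ^ 2 ≤ δ ^ 2 := by
    nlinarith [norm_nonneg (G - h), herr]
  have hfmin : f xstar ≤ f x := hmin (mem_univ x)
  have hnormv : ‖-(γ • h)‖ ^ 2 = γ ^ 2 * ‖h‖ ^ 2 := by
    rw [norm_neg, norm_smul, Real.norm_eq_abs, mul_pow, sq_abs]
  rw [hinner, hnormv] at hdesc
  have hstep : f (x - γ • h) ≤ f x - γ / 2 * ‖G‖ ^ 2 + γ / 2 * ‖G - h‖ ^ 2 := by
    have hLh : L / 2 * (γ ^ 2 * ‖h‖ ^ 2) ≤ γ / 2 * ‖h‖ ^ 2 := by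
      nlinarith [sq_nonneg ‖h‖, hγ0.le]
    nlinarith [hdesc, hGh]
  nlinarith [hstep, mul_le_mul_of_nonneg_left hPL (by positivity : (0:ℝ) ≤ γ / 2),
    mul_le_mul_of_nonneg_left hδ2 (by positivity : (0:ℝ) ≤ γ / 2)]
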